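/- arXiv:1112.0497 — 2 statements merged into one kernel-verified Lean document; each statement's English description precedes it below -/
import Mathlib

section
/- Let $0 < H < 1/2$ and let $\ell(y)$ denote the derivative $(f^{-1})'(y)$ of the inverse of the restriction of $f(s) = \frac{1}{\Gamma(H+1/2)}[(1-s)_+^{H-1/2} - (-s)_+^{H-1/2}]$ to $(-\infty, 0)$, defined for $y < 0$. Then $\ell(y) \sim -c_H\, (-y)^{-(3-2H)/(1-2H)}$ as $y \to -\infty$, where $c_H = \frac{2}{1-2H}\left(\Gamma(H+1/2)\right)^{-2/(1-2H)}$. -/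
open Filter

/-- The Mandelbrot–Van Ness kernel at `t = 1`. -/
noncomputable def mvnKernel1 (H s : ℝ) : ℝ :=
  (1 / Real.Gamma (H + 1/2)) *
    ((max (1 - s) 0) ^ (H - 1/2) - (max (-s) 0) ^ (H - 1/2))

lemma kernel_eq_on_neg (H : ℝ) {s : ℝ} (hs : s < 0) :
    mvnKernel1 H s = (1 / Real.Gamma (H + 1/2)) * ((1 - s) ^ (H - 1/2) - (-s) ^ (H - 1/2)) := by
  unfold mvnKernel1
  rw [max_eq_left (by linarith), max_eq_left (by linarith)]

lemma kernel_hasDerivAt (H : ℝ) {s : ℝ} (hs : s < 0) :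
    HasDerivAt (mvnKernel1 H)
      ((H - 1/2) / Real.Gamma (H + 1/2) * ((-s) ^ (H - 3/2) - (1 - s) ^ (H - 3/2))) s := by
  have h1 : HasDerivAt (fun t : ℝ => 1 - t) (-1 : ℝ) s := by
    exact (hasDerivAt_id' s).const_sub 1
  have h2 : HasDerivAt (fun t : ℝ => -t) (-1 : ℝ) s := by
    exact (hasDerivAt_id' s).neg
  have hd1 : HasDerivAt (fun t : ℝ => (1 - t) ^ (H - 1/2))
      ((-1) * (H - 1/2) * (1 - s) ^ (H - 1/2 - 1)) s :=
    h1.rpow_const (Or.inl (by norm_num; linarith))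
  have hd2 : HasDerivAt (fun t : ℝ => (-t) ^ (H - 1/2))
      ((-1) * (H - 1/2) * (-s) ^ (H - 1/2 - 1)) s :=
    h2.rpow_const (Or.inl (by linarith))
  have hg : HasDerivAt (fun t : ℝ => (1 / Real.Gamma (H + 1/2)) *
      ((1 - t) ^ (H - 1/2) - (-t) ^ (H - 1/2)))
      ((1 / Real.Gamma (H + 1/2)) * ((-1) * (H - 1/2) * (1 - s) ^ (H - 1/2 - 1)
        - (-1) * (H - 1/2) * (-s) ^ (H - 1/2 - 1))) s := (hd1.sub hd2).const_mul _
  have heq : mvnKernel1 H =ᶠ[nhds s] (fun t : ℝ => (1 / Real.Gamma (H + 1/2)) *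
      ((1 - t) ^ (H - 1/2) - (-t) ^ (H - 1/2))) := by
    filter_upwards [Iio_mem_nhds hs] with t ht
    exact kernel_eq_on_neg H ht
  have := hg.congr_of_eventuallyEq heq
  convert this using 1
  · rfl
  · rfl
  · rw [show H - 1/2 - 1 = H - 3/2 by ring]; ring

/-- For `0 < H < 1/2`, if `finv` is the inverse of the restriction of the kernel
`f` to `(-∞,0)` and `ℓ(y) = (f⁻¹)'(y)` for `y < 0`, then
`ℓ(y) ∼ -c_H (-y)^{-(3-2H)/(1-2H)}` as `y → -∞`, where
`c_H = (2/(1-2H)) Γ(H+1/2)^{-2/(1-2H)}`. -/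
theorem ell_asymp_atBot (H : ℝ) (hH0 : 0 < H) (hH1 : H < 1/2)
    (finv ell : ℝ → ℝ)
    (hleft : ∀ s < (0:ℝ), finv (mvnKernel1 H s) = s)
    (hright : ∀ y < (0:ℝ), mvnKernel1 H (finv y) = y)
    (hder : ∀ y < (0:ℝ), HasDerivAt finv (ell y) y) :
    Tendsto (fun y : ℝ =>
        ell y / (-((2 / (1 - 2*H)) * (Real.Gamma (H + 1/2)) ^ (-2 / (1 - 2*H))) *
          (-y) ^ (-(3 - 2*H) / (1 - 2*H))))
      atBot (nhds 1) := by
  set Γ := Real.Gamma (H + 1/2) with hΓdef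
  have hΓ : 0 < Γ := Real.Gamma_pos_of_pos (by linarith)
  set a : ℝ := H - 1/2 with hadef
  have ha : a < 0 := by rw [hadef]; linarith
  have ha' : a ≠ 0 := ne_of_lt ha
  -- finv y < 0 for y < 0
  have hsneg : ∀ y < (0:ℝ), finv y < 0 := by
    intro y hy
    by_contra h
    push_neg at h
    have h0 : mvnKernel1 H (finv y) ≥ 0 := by
      unfold mvnKernel1
      rw [max_eq_right (by linarith : -(finv y) ≤ 0), Real.zero_rpow (by rw [← hadef]; exact ha')]
      have h1 : (0:ℝ) ≤ (max (1 - finv y) 0) ^ (H - 1/2) := Real.rpow_nonneg (le_max_right _ _) _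
      have h2 : (0:ℝ) < 1 / Γ := by positivity
      rw [← hΓdef]
      nlinarith
    rw [hright y hy] at h0
    linarith
  set u : ℝ → ℝ := fun y => -(finv y) with hudef
  have hu : ∀ y < (0:ℝ), 0 < u y := fun y hy => by
    simp only [hudef]; linarith [hsneg y hy]
  -- key equation: u^a = (1+u)^a + (-(Γ*y))
  have hkey : ∀ y < (0:ℝ), (u y) ^ a = (1 + u y) ^ a + (-(Γ * y)) := by
    intro y hy
    have := hright y hy
    rw [kernel_eq_on_neg H (hsneg y hy)] at this
    have h1u : (1 : ℝ) - finv y = 1 + u y := by simp only [hudef]; ring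
    have h2u : -(finv y) = u y := rfl
    rw [h1u, h2u, ← hΓdef, ← hadef] at this
    have : (1 + u y) ^ a - (u y) ^ a = Γ * y := by
      field_simp at this
      linarith [this]
    linarith
  -- derivative identity: ell y = Γ / (a * D y)
  set D : ℝ → ℝ := fun y => (u y) ^ (a - 1) - (1 + u y) ^ (a - 1) with hDdef
  have hDpos : ∀ y < (0:ℝ), 0 < D y := by
    intro y hy
    have h1 := hu y hy
    have : (1 + u y) ^ (a - 1) < (u y) ^ (a - 1) :=
      Real.rpow_lt_rpow_of_neg h1 (by linarith) (by linarith)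
    simp only [hDdef]; linarith
  have hell : ∀ y < (0:ℝ), ell y = Γ / (a * D y) := by
    intro y hy
    have hs := hsneg y hy
    have hfd := kernel_hasDerivAt H hs
    have hcomp := hfd.comp y (hder y hy)
    simp only [Function.comp_def] at hcomp
    have hid : (fun z : ℝ => mvnKernel1 H (finv z)) =ᶠ[nhds y] id := by
      filter_upwards [Iio_mem_nhds hy] with z hz
      exact hright z hz
    have h1 : HasDerivAt (fun z : ℝ => mvnKernel1 H (finv z)) 1 y :=
      (hasDerivAt_id y).congr_of_eventuallyEq hid
    have huni := h1.unique hcomp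
    -- huni : 1 = (H-1/2)/Γ * ((-finv y)^(H-3/2) - (1-finv y)^(H-3/2)) * ell y
    have hD : (-(finv y)) ^ (H - 3/2) - (1 - finv y) ^ (H - 3/2) = D y := by
      have h1u : (1 : ℝ) - finv y = 1 + u y := by simp only [hudef]; ring
      have hexp : H - 3/2 = a - 1 := by rw [hadef]; ring
      rw [h1u, hexp]
    rw [hD, ← hΓdef, ← hadef] at huni
    have hDne : D y ≠ 0 := ne_of_gt (hDpos y hy)
    field_simp at huni ⊢
    linarith [huni]
  -- -(Γ*y) → ∞
  have hmono : Tendsto (fun y : ℝ => -(Γ * y)) atBot atTop := by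
    exact (Tendsto.const_mul_atTop hΓ (tendsto_neg_atBot_atTop (G := ℝ))).congr
      (fun y => by ring)
  have hev : ∀ᶠ y in (atBot : Filter ℝ), y < 0 := Iio_mem_atBot 0
  -- L1 : u^a → ∞
  have hL1 : Tendsto (fun y => (u y) ^ a) atBot atTop := by
    refine tendsto_atTop_mono' atBot ?_ hmono
    filter_upwards [hev] with y hy
    have := hkey y hy
    have hp : 0 < (1 + u y) ^ a := Real.rpow_pos_of_pos (by linarith [hu y hy]) a
    linarith
  -- L2 : u → 0
  have hL2 : Tendsto u atBot (nhds 0) := by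
    have h2 : Tendsto (fun t : ℝ => t ^ (1/a)) atTop (nhds 0) := by
      have h1a : (0:ℝ) < -(1/a) := by
        have : 1/a < 0 := one_div_neg.mpr ha
        linarith
      simpa using tendsto_rpow_neg_atTop h1a
    refine (h2.comp hL1).congr' ?_
    filter_upwards [hev] with y hy
    simp only [Function.comp_apply]
    rw [← Real.rpow_mul (hu y hy).le, mul_one_div_cancel ha', Real.rpow_one]
  -- L3 : (1+u)^a / (-(Γ*y)) → 0
  have hL3 : Tendsto (fun y => (1 + u y) ^ a / (-(Γ * y))) atBot (nhds 0) := by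
    refine squeeze_zero' ?_ ?_ (by simpa [one_div] using hmono.inv_tendsto_atTop)
    · filter_upwards [hev] with y hy
      have hp : 0 < (1 + u y) ^ a := Real.rpow_pos_of_pos (by linarith [hu y hy]) a
      have hq : 0 < -(Γ * y) := by nlinarith
      positivity
    · filter_upwards [hev] with y hy
      have hp : (1 + u y) ^ a ≤ 1 :=
        Real.rpow_le_one_of_one_le_of_nonpos (by linarith [hu y hy]) ha.le
      have hq : 0 < -(Γ * y) := by nlinarith
      calc (1 + u y) ^ a / (-(Γ * y)) ≤ 1 / (-(Γ * y)) := by gcongr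
        _ = (-(Γ * y))⁻¹ := one_div _
  -- L4 : u^a / (-(Γ*y)) → 1
  have hL4 : Tendsto (fun y => (u y) ^ a / (-(Γ * y))) atBot (nhds 1) := by
    have h := tendsto_const_nhds.add hL3 (f := fun _ : ℝ => (1:ℝ)) (x := atBot)
    rw [add_zero] at h
    refine h.congr' ?_
    filter_upwards [hev] with y hy
    have hq : -(Γ * y) ≠ 0 := by nlinarith
    rw [hkey y hy, add_div, div_self hq]
    ring
  -- L5 : u / (-(Γ*y))^(1/a) → 1
  have hL5 : Tendsto (fun y => u y / (-(Γ * y)) ^ (1/a)) atBot (nhds 1) := by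
    have hc : ContinuousAt (fun x : ℝ => x ^ (1/a)) 1 :=
      Real.continuousAt_rpow_const 1 (1/a) (Or.inl one_ne_zero)
    have h := hc.tendsto.comp hL4
    rw [Real.one_rpow] at h
    refine h.congr' ?_
    filter_upwards [hev] with y hy
    have hq : 0 < -(Γ * y) := by nlinarith
    simp only [Function.comp_apply]
    rw [Real.div_rpow (Real.rpow_nonneg (hu y hy).le a) hq.le,
      ← Real.rpow_mul (hu y hy).le, mul_one_div_cancel ha', Real.rpow_one]
  -- L6 : F2 → 1
  have hL6 : Tendsto (fun y => (u y / (-(Γ * y)) ^ (1/a)) ^ (1 - a)) atBot (nhds 1) := by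
    have hc : ContinuousAt (fun x : ℝ => x ^ (1 - a)) 1 :=
      Real.continuousAt_rpow_const 1 (1 - a) (Or.inl one_ne_zero)
    have h := hc.tendsto.comp hL5
    rw [Real.one_rpow] at h
    exact h
  -- L7 : F1 → 1
  have hL7 : Tendsto (fun y => (1 - (1 + u y) ^ (a - 1) * (u y) ^ (1 - a))⁻¹) atBot (nhds 1) := by
    have t1 : Tendsto (fun y => (1 + u y) ^ (a - 1)) atBot (nhds 1) := by
      have hc : ContinuousAt (fun x : ℝ => x ^ (a - 1)) 1 :=
        Real.continuousAt_rpow_const 1 (a - 1) (Or.inl one_ne_zero)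
      have h1u : Tendsto (fun y => 1 + u y) atBot (nhds 1) := by
        simpa using tendsto_const_nhds.add hL2 (f := fun _ : ℝ => (1:ℝ))
      have h := hc.tendsto.comp h1u
      rwa [Real.one_rpow] at h
    have t2 : Tendsto (fun y => (u y) ^ (1 - a)) atBot (nhds 0) := by
      have hc : ContinuousAt (fun x : ℝ => x ^ (1 - a)) 0 :=
        Real.continuousAt_rpow_const 0 (1 - a) (Or.inr (by linarith))
      have h := hc.tendsto.comp hL2
      rwa [Real.zero_rpow (by linarith : (1:ℝ) - a ≠ 0)] at h
    have t3 : Tendsto (fun y => (1:ℝ) - (1 + u y) ^ (a - 1) * (u y) ^ (1 - a)) atBot (nhds 1) := by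
      have := ((tendsto_const_nhds : Tendsto (fun _ : ℝ => (1:ℝ)) atBot (nhds 1)).sub
        (t1.mul t2))
      simpa using this
    have := t3.inv₀ one_ne_zero
    simpa using this
  -- combine
  have hcomb := hL7.mul hL6
  rw [mul_one] at hcomb
  refine hcomb.congr' ?_
  filter_upwards [hev] with y hy
  -- algebraic identity
  have hUpos := hu y hy
  have h1U : (0:ℝ) < 1 + u y := by linarith
  have hDy := hDpos y hy
  have hny : (0:ℝ) < -y := by linarith
  have hnΓy : (0:ℝ) < -(Γ * y) := by nlinarith
  have e0 : (u y) ^ (a - 1) * (u y) ^ (1 - a) = 1 := by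
    rw [← Real.rpow_add hUpos]; norm_num
  have e5 : 1 - (1 + u y) ^ (a - 1) * (u y) ^ (1 - a) = D y * (u y) ^ (1 - a) := by
    simp only [hDdef, sub_mul, e0]
  have e1 : (u y / (-(Γ * y)) ^ (1/a)) ^ (1 - a)
      = (u y) ^ (1 - a) / (-(Γ * y)) ^ ((1 - a)/a) := by
    rw [Real.div_rpow hUpos.le (Real.rpow_nonneg hnΓy.le _), ← Real.rpow_mul hnΓy.le,
      show 1/a * (1 - a) = (1 - a)/a from by ring]
  have e2 : -(Γ * y) = Γ * (-y) := by ring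
  have e3 : (Γ * (-y)) ^ ((1 - a)/a) = Γ ^ ((1 - a)/a) * (-y) ^ ((1 - a)/a) :=
    Real.mul_rpow hΓ.le hny.le
  have h2Ha : 1 - 2*H = -2*a := by rw [hadef]; ring
  have h2H0 : (1:ℝ) - 2*H ≠ 0 := by rw [h2Ha]; simp [ha']
  have eexp : -(3 - 2*H) / (1 - 2*H) = (1 - a)/a := by
    rw [div_eq_div_iff h2H0 ha', hadef]; ring
  have eexp2 : -2 / (1 - 2*H) = 1/a := by
    rw [div_eq_div_iff h2H0 ha', h2Ha]; ring
  have eΓ : Γ * Γ ^ ((1 - a)/a) = Γ ^ (1/a) := by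
    nth_rewrite 1 [← Real.rpow_one Γ]
    rw [← Real.rpow_add hΓ]
    congr 1
    field_simp
    ring
  have hPne : Γ ^ (1/a) ≠ 0 := ne_of_gt (Real.rpow_pos_of_pos hΓ _)
  have hQne : Γ ^ ((1 - a)/a) ≠ 0 := ne_of_gt (Real.rpow_pos_of_pos hΓ _)
  have hRne : (-y) ^ ((1 - a)/a) ≠ 0 := ne_of_gt (Real.rpow_pos_of_pos hny _)
  have hVne : (u y) ^ (1 - a) ≠ 0 := ne_of_gt (Real.rpow_pos_of_pos hUpos _)
  have hDne : D y ≠ 0 := ne_of_gt hDy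
  have h12H : 2 / (1 - 2*H) = -(1/a) := by
    rw [h2Ha, neg_div', div_eq_div_iff (by simpa using ha') ha']; ring
  rw [hell y hy, eexp, eexp2, e5, e1, e2, e3, h12H]
  field_simp
  linear_combination -eΓ
end

section
/- Let $h : [a,b] \to (0,\infty)$ be a positive function with a continuous nonvanishing derivative on $[a,b] \subset \mathbb{R}$. Then there exists $c > 0$ such that for all $x \in \mathbb{R}$, $\int_a^b (1 - \cos(h(s)x))\, ds \geq c\,(x^2 \wedge 1)$. -/
open MeasureTheory
set_option maxHeartbeats 1000000

lemma abs_sin_abs' (y : ℝ) : |Real.sin (|y|)| = |Real.sin y| := by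
  rcases abs_choice y with hy | hy
  · rw [hy]
  · rw [hy, Real.sin_neg, abs_neg]

lemma sin_lip (p q : ℝ) : |Real.sin p - Real.sin q| ≤ |p - q| := by
  rw [Real.sin_sub_sin, abs_mul, abs_mul, abs_two]
  have b1 : |Real.sin ((p - q) / 2)| ≤ |(p - q) / 2| := Real.abs_sin_le_abs
  have b2 : |Real.cos ((p + q) / 2)| ≤ 1 := Real.abs_cos_le_one _
  calc 2 * |Real.sin ((p - q) / 2)| * |Real.cos ((p + q) / 2)|
      ≤ 2 * |(p - q) / 2| * 1 := by
        gcongr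
    _ = |p - q| := by rw [abs_div, abs_two]; ring
  
lemma trig_aux {u : ℝ} (hu : 0 ≤ u) : min (u ^ 3) u ≤ 26 * (u - |Real.sin u|) := by
  have hsin1 : Real.sin 1 ≤ 85 / 96 := by
    have h := (abs_le.1 (Real.sin_bound (x := 1) (by norm_num))).2
    norm_num at h
    linarith
  rcases le_or_gt u 1 with h1 | h1
  · -- u ≤ 1
    have hs : |Real.sin u| = Real.sin u := by
      rw [abs_of_nonneg]
      exact Real.sin_nonneg_of_nonneg_of_le_pi hu (by linarith [Real.pi_gt_three])
    have h := (abs_le.1 (Real.sin_bound (x := u) (by rw [abs_of_nonneg hu]; exact h1))).2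
    rw [abs_of_nonneg hu] at h
    have hu4 : u ^ 4 ≤ u ^ 3 := by
      nlinarith [mul_nonneg (pow_nonneg hu 3) (sub_nonneg.2 h1)]
    have hmin : min (u ^ 3) u = u ^ 3 := min_eq_left (by
      nlinarith [mul_nonneg (mul_nonneg hu (sub_nonneg.2 h1)) (by linarith : (0:ℝ) ≤ 1 + u)])
    rw [hmin, hs]
    nlinarith [pow_nonneg hu 3, mul_le_mul_of_nonneg_left hu4 hu]
  · -- u > 1
    have hmin : min (u ^ 3) u = u := min_eq_right (by
      nlinarith [mul_nonneg (mul_nonneg (by linarith : (0:ℝ) ≤ u) (by linarith : (0:ℝ) ≤ u - 1))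
        (by linarith : (0:ℝ) ≤ u + 1)])
    rw [hmin]
    rcases le_or_gt (26 / 25 : ℝ) u with h2 | h2
    · have : |Real.sin u| ≤ 1 := Real.abs_sin_le_one u
      linarith
    · have hs : |Real.sin u| = Real.sin u := by
        rw [abs_of_nonneg]
        exact Real.sin_nonneg_of_nonneg_of_le_pi hu (by linarith [Real.pi_gt_three])
      have h3 := (abs_le.1 (sin_lip u 1)).2
      rw [abs_of_nonneg (show (0:ℝ) ≤ u - 1 by linarith)] at h3
      rw [hs]
      linarith

lemma min_mul_min_le {α β t : ℝ} (hα : 0 ≤ α) (hβ : 0 ≤ β) (ht : 0 ≤ t) :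
    min α β * min t 1 ≤ min (α * t) β := by
  have h1 : min α β ≤ α := min_le_left _ _
  have h2 : min α β ≤ β := min_le_right _ _
  have h3 : min t 1 ≤ t := min_le_left _ _
  have h4 : min t 1 ≤ 1 := min_le_right _ _
  have h5 : 0 ≤ min α β := le_min hα hβ
  have h6 : 0 ≤ min t 1 := le_min ht zero_le_one
  refine le_min ?_ ?_
  · calc min α β * min t 1 ≤ α * t := mul_le_mul h1 h3 h6 hα
      _ = α * t := rfl
  · calc min α β * min t 1 ≤ β * 1 := mul_le_mul h2 h4 h6 hβ
      _ = β := mul_one β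

/-- If `h : [a,b] → (0,∞)` has a continuous nonvanishing derivative on `[a,b]`,
then there is `c > 0` with `∫_a^b (1 - cos(h(s)x)) ds ≥ c (x² ∧ 1)` for all `x`. -/
theorem integral_one_sub_cos_lower_bound (a b : ℝ) (hab : a < b)
    (h h' : ℝ → ℝ)
    (hpos : ∀ s ∈ Set.Icc a b, 0 < h s)
    (hder : ∀ s ∈ Set.Icc a b, HasDerivAt h (h' s) s)
    (hcont : ContinuousOn h' (Set.Icc a b))
    (hne : ∀ s ∈ Set.Icc a b, h' s ≠ 0) :
    ∃ c > (0:ℝ), ∀ x : ℝ,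
      c * min (x ^ 2) 1 ≤ ∫ s in a..b, (1 - Real.cos (h s * x)) := by
  have hIcc : Set.uIcc a b = Set.Icc a b := Set.uIcc_of_le hab.le
  have hhc : ContinuousOn h (Set.Icc a b) := fun s hs =>
    ((hder s hs).continuousAt).continuousWithinAt
  obtain ⟨ε, hε, hsign⟩ : ∃ ε : ℝ, |ε| = 1 ∧ ∀ s ∈ Set.Icc a b, 0 < ε * h' s := by
    have ha' : a ∈ Set.Icc a b := ⟨le_refl a, hab.le⟩
    rcases (hne a ha').lt_or_gt with hneg | hpos'
    · refine ⟨-1, by norm_num, fun s hs => ?_⟩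
      rcases (hne s hs).lt_or_gt with hlt | hgt
      · nlinarith
      · exfalso
        have hsub : Set.Icc a s ⊆ Set.Icc a b := Set.Icc_subset_Icc le_rfl hs.2
        obtain ⟨t, ht, ht0⟩ := intermediate_value_Icc hs.1 (hcont.mono hsub)
          (Set.mem_Icc.2 ⟨hneg.le, hgt.le⟩)
        exact hne t (hsub ht) ht0
    · refine ⟨1, by norm_num, fun s hs => ?_⟩
      rcases (hne s hs).lt_or_gt with hlt | hgt
      · exfalso
        have hsub : Set.Icc a s ⊆ Set.Icc a b := Set.Icc_subset_Icc le_rfl hs.2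
        obtain ⟨t, ht, ht0⟩ := intermediate_value_Icc' hs.1 (hcont.mono hsub)
          (Set.mem_Icc.2 ⟨hlt.le, hpos'.le⟩)
        exact hne t (hsub ht) ht0
      · nlinarith
  obtain ⟨s₀, hs₀, hmax⟩ := isCompact_Icc.exists_isMaxOn (Set.nonempty_Icc.2 hab.le)
    (continuousOn_const.mul hcont)
  set M := ε * h' s₀ with hMdef
  have hM : 0 < M := hsign s₀ hs₀
  have hMb : ∀ s ∈ Set.Icc a b, ε * h' s ≤ M := fun s hs => hmax hs
  obtain ⟨ξ, hξ, hslope⟩ := exists_hasDerivAt_eq_slope h h' hab hhc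
    (fun s hs => hder s ⟨hs.1.le, hs.2.le⟩)
  set D := ε * (h b - h a) with hDdef
  have hD : 0 < D := by
    have h1 := hsign ξ ⟨hξ.1.le, hξ.2.le⟩
    rw [hslope] at h1
    have hba : 0 < b - a := by linarith
    have he : ε * (h b - h a) = ε * ((h b - h a) / (b - a)) * (b - a) := by
      field_simp
    rw [hDdef, he]
    exact mul_pos h1 hba
  refine ⟨min (D ^ 3 / 8) (D / 2) / (13 * M), by positivity, fun x => ?_⟩
  rcases eq_or_ne x 0 with rfl | hx
  · simp
  · have hxa : 0 < |x| := abs_pos.2 hx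
    set u := D * |x| / 2 with hudef
    have hu : 0 ≤ u := by positivity
    set T := ∫ s in a..b, (1 - Real.cos (h s * x)) with hTdef
    have hcos_cont : ContinuousOn (fun s => 1 - Real.cos (h s * x)) (Set.Icc a b) :=
      continuousOn_const.sub (Real.continuous_cos.comp_continuousOn (hhc.mul continuousOn_const))
    have hint1 : IntervalIntegrable (fun s => 1 - Real.cos (h s * x)) volume a b := by
      apply ContinuousOn.intervalIntegrable; rwa [hIcc]
    have hint2 : IntervalIntegrable (fun s => h' s * (1 - Real.cos (h s * x))) volume a b := by
      apply ContinuousOn.intervalIntegrable; rw [hIcc]; exact hcont.mul hcos_cont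
    have hint3 : IntervalIntegrable (fun s => ε / M * (h' s * (1 - Real.cos (h s * x))))
        volume a b := hint2.const_mul _
    have hFTC : ∫ s in a..b, h' s * (1 - Real.cos (h s * x)) =
        (h b - Real.sin (h b * x) / x) - (h a - Real.sin (h a * x) / x) := by
      apply intervalIntegral.integral_eq_sub_of_hasDerivAt
      · intro s hs
        rw [hIcc] at hs
        have hd : HasDerivAt (fun s => h s - Real.sin (h s * x) / x)
            (h' s - Real.cos (h s * x) * (h' s * x) / x) s :=
          (hder s hs).sub ((((hder s hs).mul_const x).sin).div_const x)
        refine hd.congr_deriv ?_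
        rw [mul_div_assoc, mul_div_cancel_right₀ _ hx]
        ring
      · exact hint2
    have hmono : ∫ s in a..b, ε / M * (h' s * (1 - Real.cos (h s * x))) ≤ T := by
      apply intervalIntegral.integral_mono_on hab.le hint3 hint1
      intro s hs
      have h1 : 0 < ε * h' s := hsign s hs
      have h2 : ε * h' s ≤ M := hMb s hs
      have h3 : Real.cos (h s * x) ≤ 1 := Real.cos_le_one _
      rw [div_mul_eq_mul_div, div_le_iff₀ hM]
      nlinarith [mul_nonneg (sub_nonneg.2 h2) (sub_nonneg.2 h3)]
    have hpull : ∫ s in a..b, ε / M * (h' s * (1 - Real.cos (h s * x))) =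
        ε / M * ((h b - Real.sin (h b * x) / x) - (h a - Real.sin (h a * x) / x)) := by
      rw [intervalIntegral.integral_const_mul, hFTC]
    -- sin difference bound
    have habs : |h b - h a| = D := by
      rw [hDdef] at hD ⊢
      rcases abs_cases ε with ⟨he1, _⟩ | ⟨he1, _⟩ <;> rw [he1] at hε <;>
        rcases abs_cases (h b - h a) with ⟨h2, _⟩ | ⟨h2, _⟩ <;> rw [h2] <;> nlinarith
    have hΔ : |Real.sin (h b * x) - Real.sin (h a * x)| ≤ 2 * |Real.sin u| := by
      rw [Real.sin_sub_sin, abs_mul, abs_mul, abs_two]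
      have e1 : |Real.sin ((h b * x - h a * x) / 2)| = |Real.sin u| := by
        rw [← abs_sin_abs' ((h b * x - h a * x) / 2)]
        congr 2
        rw [hudef, ← habs, abs_div, abs_two,
          show h b * x - h a * x = (h b - h a) * x by ring, abs_mul]
      rw [e1]
      have := Real.abs_cos_le_one ((h b * x + h a * x) / 2)
      nlinarith [abs_nonneg (Real.sin u)]
    -- main lower bound: D*|x| - 2*|sin u| ≤ M * T * |x|
    have hεW : ε * ((h b - Real.sin (h b * x) / x) - (h a - Real.sin (h a * x) / x))
        ≥ D - 2 * |Real.sin u| / |x| := by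
      have hq : ε * ((h b - Real.sin (h b * x) / x) - (h a - Real.sin (h a * x) / x))
          = D - ε * (Real.sin (h b * x) - Real.sin (h a * x)) / x := by
        rw [hDdef]; ring
      rw [hq]
      have hb1 : ε * (Real.sin (h b * x) - Real.sin (h a * x)) / x
          ≤ 2 * |Real.sin u| / |x| := by
        calc ε * (Real.sin (h b * x) - Real.sin (h a * x)) / x
            ≤ |ε * (Real.sin (h b * x) - Real.sin (h a * x)) / x| := le_abs_self _
          _ = |Real.sin (h b * x) - Real.sin (h a * x)| / |x| := by
              rw [abs_div, abs_mul, hε, one_mul]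
          _ ≤ 2 * |Real.sin u| / |x| := by gcongr
      linarith
    have hMT : D - 2 * |Real.sin u| / |x| ≤ M * T := by
      have h1 : ε / M * ((h b - Real.sin (h b * x) / x) - (h a - Real.sin (h a * x) / x)) ≤ T := by
        rw [← hpull]; exact hmono
      have h2 : ε * ((h b - Real.sin (h b * x) / x) - (h a - Real.sin (h a * x) / x)) ≤ M * T := by
        have := mul_le_mul_of_nonneg_left h1 hM.le
        calc ε * ((h b - Real.sin (h b * x) / x) - (h a - Real.sin (h a * x) / x))
            = M * (ε / M * ((h b - Real.sin (h b * x) / x) - (h a - Real.sin (h a * x) / x))) := by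
              field_simp
          _ ≤ M * T := this
      linarith
    have hkey : 2 * (u - |Real.sin u|) ≤ M * T * |x| := by
      have := mul_le_mul_of_nonneg_right hMT (abs_nonneg x)
      have e : (D - 2 * |Real.sin u| / |x|) * |x| = 2 * (u - |Real.sin u|) := by
        rw [hudef]; field_simp
      linarith [e ▸ this]
    have htrig := trig_aux hu
    -- min bound
    have hmin1 : |x| * (min (D ^ 3 / 8) (D / 2) * min (x ^ 2) 1) ≤ min (u ^ 3) u := by
      have hmm : min (D ^ 3 / 8) (D / 2) * min (x ^ 2) 1 ≤ min (D ^ 3 / 8 * x ^ 2) (D / 2) :=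
        min_mul_min_le (by positivity) (by positivity) (sq_nonneg x)
      have hsq : x ^ 2 = |x| ^ 2 := (sq_abs x).symm
      have hu3 : u ^ 3 = D ^ 3 / 8 * x ^ 2 * |x| := by rw [hudef, hsq]; ring
      have huu : u = D / 2 * |x| := by rw [hudef]; ring
      refine le_min ?_ ?_
      · rw [hu3]
        have := min_le_left (D ^ 3 / 8 * x ^ 2) (D / 2)
        nlinarith [le_trans hmm this]
      · rw [huu]
        have := min_le_right (D ^ 3 / 8 * x ^ 2) (D / 2)
        nlinarith [le_trans hmm this]
    -- assemble
    have hfinal : min (D ^ 3 / 8) (D / 2) * min (x ^ 2) 1 ≤ 13 * M * T := by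
      have hchain : |x| * (min (D ^ 3 / 8) (D / 2) * min (x ^ 2) 1) ≤ |x| * (13 * M * T) := by
        calc |x| * (min (D ^ 3 / 8) (D / 2) * min (x ^ 2) 1) ≤ min (u ^ 3) u := hmin1
          _ ≤ 26 * (u - |Real.sin u|) := htrig
          _ ≤ 13 * (M * T * |x|) := by linarith
          _ = |x| * (13 * M * T) := by ring
      exact le_of_mul_le_mul_left hchain hxa
    rw [div_mul_eq_mul_div, div_le_iff₀ (by positivity : (0:ℝ) < 13 * M)]
    calc min (D ^ 3 / 8) (D / 2) * min (x ^ 2) 1 ≤ 13 * M * T := hfinal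
      _ = T * (13 * M) := by ring
end
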